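/- Let Y be a real random variable with E[Y] = 0 and all moments finite, and let (Y_k) be i.i.d. copies with partial sums S_k. Then S_Y(j,m) = (1/m!) ∑_{k=0}^{m} C(m,k)(-1)^{m-k} E[S_k^j] = 0 whenever j < 2m. -/

import Mathlib

open MeasureTheory ProbabilityTheory

-- algebraic finite-difference identity
lemma diff_identity (f : ℕ → ℝ) (m : ℕ) :
    ∑ k ∈ Finset.range (m+2), ((m+1).choose k : ℝ) * (-1) ^ k * f k
      = ∑ k ∈ Finset.range (m+1), (m.choose k : ℝ) * (-1) ^ k * (f k - f (k+1)) := by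
  rw [Finset.sum_range_succ' (fun k => ((m+1).choose k : ℝ) * (-1) ^ k * f k) (m+1)]
  have h1 : ∀ k ∈ Finset.range (m+1),
      (((m+1).choose (k+1) : ℝ)) * (-1) ^ (k+1) * f (k+1)
        = ((m.choose k : ℝ)) * (-1) ^ (k+1) * f (k+1)
          + ((m.choose (k+1) : ℝ)) * (-1) ^ (k+1) * f (k+1) := by
    intro k _
    rw [Nat.choose_succ_succ]
    push_cast
    ring
  rw [Finset.sum_congr rfl h1, Finset.sum_add_distrib]
  have h2 : (∑ k ∈ Finset.range (m+1), ((m.choose (k+1) : ℝ)) * (-1) ^ (k+1) * f (k+1))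
      + ((m+1).choose 0 : ℝ) * (-1) ^ 0 * f 0
      = ∑ k ∈ Finset.range (m+2), ((m.choose k : ℝ)) * (-1) ^ k * f k := by
    rw [Finset.sum_range_succ' (fun k => ((m.choose k : ℝ)) * (-1) ^ k * f k) (m+1)]
    simp
  have h3 : ∑ k ∈ Finset.range (m+2), ((m.choose k : ℝ)) * (-1) ^ k * f k
      = ∑ k ∈ Finset.range (m+1), ((m.choose k : ℝ)) * (-1) ^ k * f k := by
    rw [Finset.sum_range_succ]
    simp [Nat.choose_eq_zero_of_lt (Nat.lt_succ_self m)]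
  rw [add_assoc, h2, h3, ← Finset.sum_add_distrib]
  refine Finset.sum_congr rfl (fun k _ => ?_)
  ring

section Aux

variable {Ω : Type*} [MeasurableSpace Ω] (μ : Measure Ω) [IsProbabilityMeasure μ]
    (Y : ℕ → Ω → ℝ) (hmeas : ∀ i, Measurable (Y i))
    (hindep : iIndepFun Y μ)
    (hident : ∀ i, IdentDistrib (Y i) (Y 0) μ μ)
    (hmom : ∀ j : ℕ, Integrable (fun ω => |Y 0 ω| ^ j) μ)
    (hcent : ∫ ω, Y 0 ω ∂μ = 0)

-- integrability of powers of each Y i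
include hmeas hident hmom in
lemma intY (i p : ℕ) : Integrable (fun ω => Y i ω ^ p) μ := by
  have h0 : Integrable (fun ω => Y 0 ω ^ p) μ := by
    refine (hmom p).mono' ((hmeas 0).pow_const p).aestronglyMeasurable ?_
    filter_upwards with ω
    rw [Real.norm_eq_abs, abs_pow]
  have hid : IdentDistrib (fun ω => Y i ω ^ p) (fun ω => Y 0 ω ^ p) μ μ :=
    (hident i).comp (measurable_id.pow_const p)
  exact hid.integrable_iff.mpr h0

include hmeas hindep in
lemma indS (k : ℕ) :
    IndepFun (fun ω => ∑ i ∈ Finset.range k, Y i ω) (Y k) μ := by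
  have := hindep.indepFun_sum_range_succ hmeas k
  have heq : (∑ j ∈ Finset.range k, Y j) = fun ω => ∑ i ∈ Finset.range k, Y i ω := by
    funext ω; simp
  rwa [heq] at this

include hmeas hindep hident hmom in
lemma intS (k : ℕ) : ∀ j, Integrable (fun ω => (∑ i ∈ Finset.range k, Y i ω) ^ j) μ := by
  induction k with
  | zero =>
    intro j
    simp only [Finset.range_zero, Finset.sum_empty]
    rcases eq_or_ne j 0 with h | h
    · simp [h]
    · simp [zero_pow h]
  | succ k ih =>
    intro j
    have hexp : (fun ω => (∑ i ∈ Finset.range (k+1), Y i ω) ^ j)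
        = fun ω => ∑ p ∈ Finset.range (j+1),
            (∑ i ∈ Finset.range k, Y i ω) ^ p * Y k ω ^ (j - p) * (j.choose p : ℝ) := by
      funext ω
      rw [Finset.sum_range_succ, add_pow]
    rw [hexp]
    refine integrable_finset_sum _ (fun p _ => ?_)
    have hind : IndepFun (fun ω => (∑ i ∈ Finset.range k, Y i ω) ^ p)
        (fun ω => Y k ω ^ (j - p)) μ :=
      (indS μ Y hmeas hindep k).comp (measurable_id.pow_const p) (measurable_id.pow_const (j-p))
    have := (hind.integrable_mul (ih p) (intY μ Y hmeas hident hmom k (j - p))).mul_const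
      ((j.choose p : ℝ))
    exact this.congr (by filter_upwards with ω; simp [Pi.mul_apply])

include hmeas hindep hident hmom in
-- the recursion for moments of partial sums
lemma Erec (k j : ℕ) :
    (∫ ω, (∑ i ∈ Finset.range (k+1), Y i ω) ^ j ∂μ)
      = ∑ p ∈ Finset.range (j+1), (j.choose p : ℝ)
          * (∫ ω, (∑ i ∈ Finset.range k, Y i ω) ^ p ∂μ) * (∫ ω, Y 0 ω ^ (j - p) ∂μ) := by
  have hexp : (fun ω => (∑ i ∈ Finset.range (k+1), Y i ω) ^ j)
      = fun ω => ∑ p ∈ Finset.range (j+1),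
          (∑ i ∈ Finset.range k, Y i ω) ^ p * Y k ω ^ (j - p) * (j.choose p : ℝ) := by
    funext ω
    rw [Finset.sum_range_succ, add_pow]
  rw [hexp, integral_finset_sum]
  · refine Finset.sum_congr rfl (fun p _ => ?_)
    have hind : IndepFun (fun ω => (∑ i ∈ Finset.range k, Y i ω) ^ p)
        (fun ω => Y k ω ^ (j - p)) μ :=
      (indS μ Y hmeas hindep k).comp (measurable_id.pow_const p) (measurable_id.pow_const (j-p))
    have hmul := hind.integral_mul_eq_mul_integral
      (intS μ Y hmeas hindep hident hmom k p).aestronglyMeasurable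
      (intY μ Y hmeas hident hmom k (j - p)).aestronglyMeasurable
    have hmul' : (∫ ω, (∑ i ∈ Finset.range k, Y i ω) ^ p * Y k ω ^ (j - p) ∂μ)
        = (∫ ω, (∑ i ∈ Finset.range k, Y i ω) ^ p ∂μ) * (∫ ω, Y k ω ^ (j - p) ∂μ) := hmul
    have hYk : (∫ ω, Y k ω ^ (j - p) ∂μ) = ∫ ω, Y 0 ω ^ (j - p) ∂μ :=
      ((hident k).comp (measurable_id.pow_const (j-p))).integral_eq
    rw [integral_mul_const, hmul', hYk]
    ring
  · intro p _
    have hind : IndepFun (fun ω => (∑ i ∈ Finset.range k, Y i ω) ^ p)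
        (fun ω => Y k ω ^ (j - p)) μ :=
      (indS μ Y hmeas hindep k).comp (measurable_id.pow_const p) (measurable_id.pow_const (j-p))
    have := (hind.integrable_mul (intS μ Y hmeas hindep hident hmom k p)
      (intY μ Y hmeas hident hmom k (j - p))).mul_const ((j.choose p : ℝ))
    exact this.congr (by filter_upwards with ω; simp [Pi.mul_apply])

include hmeas hindep hident hmom hcent in
lemma Ediff (k j : ℕ) :
    (∫ ω, (∑ i ∈ Finset.range k, Y i ω) ^ j ∂μ)
      - (∫ ω, (∑ i ∈ Finset.range (k+1), Y i ω) ^ j ∂μ)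
    = -∑ p ∈ Finset.range (j - 1), (j.choose p : ℝ)
        * (∫ ω, Y 0 ω ^ (j - p) ∂μ) * (∫ ω, (∑ i ∈ Finset.range k, Y i ω) ^ p ∂μ) := by
  have hM0 : (∫ ω, Y 0 ω ^ 0 ∂μ) = 1 := by simp
  rcases j with _ | _ | n
  · simp
  · have hrec := Erec μ Y hmeas hindep hident hmom k 1
    rw [hrec]
    simp only [Finset.sum_range_succ, Finset.sum_range_zero]
    norm_num [hM0]
    simpa using hcent
  · have hrec := Erec μ Y hmeas hindep hident hmom k (n+2)
    rw [hrec, Finset.sum_range_succ, Finset.sum_range_succ]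
    have e1 : n + 2 - (n + 1) = 1 := by omega
    have e2 : n + 2 - (n + 2) = 0 := by omega
    have e3 : n + 2 - 1 = n + 1 := by omega
    rw [e1, e2, e3, hM0]
    simp only [pow_one, hcent, Nat.choose_self, Nat.cast_one]
    have hcomm : ∑ p ∈ Finset.range (n+1), ((n+2).choose p : ℝ)
          * (∫ ω, (∑ i ∈ Finset.range k, Y i ω) ^ p ∂μ) * (∫ ω, Y 0 ω ^ (n + 2 - p) ∂μ)
        = ∑ p ∈ Finset.range (n+1), ((n+2).choose p : ℝ)
          * (∫ ω, Y 0 ω ^ (n + 2 - p) ∂μ) * (∫ ω, (∑ i ∈ Finset.range k, Y i ω) ^ p ∂μ) :=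
      Finset.sum_congr rfl (fun p _ => by ring)
    rw [hcomm]
    ring

include hmeas hindep hident hmom hcent in
lemma main_vanish : ∀ m : ℕ, ∀ j : ℕ, j < 2 * m →
    ∑ k ∈ Finset.range (m+1), (m.choose k : ℝ) * (-1) ^ k
      * (∫ ω, (∑ i ∈ Finset.range k, Y i ω) ^ j ∂μ) = 0 := by
  intro m
  induction m with
  | zero => intro j hj; omega
  | succ m ih =>
    intro j hj
    rw [show m + 1 + 1 = m + 2 from rfl,
      diff_identity (fun k => ∫ ω, (∑ i ∈ Finset.range k, Y i ω) ^ j ∂μ) m]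
    have hco : ∀ k ∈ Finset.range (m+1),
        (m.choose k : ℝ) * (-1) ^ k
            * ((∫ ω, (∑ i ∈ Finset.range k, Y i ω) ^ j ∂μ)
              - (∫ ω, (∑ i ∈ Finset.range (k+1), Y i ω) ^ j ∂μ))
          = ∑ p ∈ Finset.range (j-1),
              -(((j.choose p : ℝ) * (∫ ω, Y 0 ω ^ (j - p) ∂μ))
                * ((m.choose k : ℝ) * (-1) ^ k
                  * (∫ ω, (∑ i ∈ Finset.range k, Y i ω) ^ p ∂μ))) := by
      intro k _
      rw [Ediff μ Y hmeas hindep hident hmom hcent k j, Finset.sum_neg_distrib, mul_neg,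
        Finset.mul_sum]
      congr 1
      refine Finset.sum_congr rfl (fun p _ => ?_)
      ring
    rw [Finset.sum_congr rfl hco, Finset.sum_comm]
    refine Finset.sum_eq_zero (fun p hp => ?_)
    rw [Finset.mem_range] at hp
    have hp2 : p < 2 * m := by omega
    rw [Finset.sum_neg_distrib, ← Finset.mul_sum, ih p hp2, mul_zero, neg_zero]

end Aux

/-- If `E[Y] = 0` and all moments are finite, then the probabilistic Stirling number
`S_Y(j,m) = (1/m!) ∑_{k=0}^m C(m,k)(-1)^{m-k} E[S_k^j]` vanishes whenever `j < 2m`. -/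
theorem stmt_7 {Ω : Type*} [MeasurableSpace Ω] (μ : Measure Ω) [IsProbabilityMeasure μ]
    (Y : ℕ → Ω → ℝ) (hmeas : ∀ i, Measurable (Y i))
    (hindep : iIndepFun Y μ)
    (hident : ∀ i, IdentDistrib (Y i) (Y 0) μ μ)
    (hmom : ∀ j : ℕ, Integrable (fun ω => |Y 0 ω| ^ j) μ)
    (hcent : ∫ ω, Y 0 ω ∂μ = 0)
    (j m : ℕ) (hjm : j < 2 * m) :
    (m.factorial : ℝ)⁻¹ * ∑ k ∈ Finset.range (m + 1), (m.choose k : ℝ) * (-1) ^ (m - k) *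
        ∫ ω, (∑ i ∈ Finset.range k, Y i ω) ^ j ∂μ = 0 := by
  have hsign : ∀ k ∈ Finset.range (m+1), ((-1 : ℝ)) ^ (m - k) = (-1) ^ m * (-1) ^ k := by
    intro k hk
    rw [Finset.mem_range] at hk
    have hkm : m - k + k = m := Nat.sub_add_cancel (by omega)
    have h1 : ((-1 : ℝ)) ^ (m - k) * (-1) ^ k = (-1) ^ m := by rw [← pow_add, hkm]
    have h2 : ((-1 : ℝ)) ^ k * (-1) ^ k = 1 := by rw [← mul_pow]; norm_num
    calc ((-1 : ℝ)) ^ (m - k) = (-1) ^ (m - k) * ((-1) ^ k * (-1) ^ k) := by rw [h2, mul_one]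
      _ = (-1) ^ m * (-1) ^ k := by rw [← mul_assoc, h1]
  have hrw : ∑ k ∈ Finset.range (m + 1), (m.choose k : ℝ) * (-1) ^ (m - k) *
        ∫ ω, (∑ i ∈ Finset.range k, Y i ω) ^ j ∂μ
      = (-1) ^ m * ∑ k ∈ Finset.range (m + 1), (m.choose k : ℝ) * (-1) ^ k *
        ∫ ω, (∑ i ∈ Finset.range k, Y i ω) ^ j ∂μ := by
    rw [Finset.mul_sum]
    refine Finset.sum_congr rfl (fun k hk => ?_)
    rw [hsign k hk]
    ring
  rw [hrw, main_vanish μ Y hmeas hindep hident hmom hcent m j hjm, mul_zero, mul_zero]
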